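/- arXiv:1008.2365 — 5 statements merged into one kernel-verified Lean document; each statement's English description precedes it below -/
import Mathlib

section
/- The composite ψ̃ ∘ φ̃ is the identity on the marked order polytope O(P,A)_λ. -/
open Finset Set

section Marked

variable {P : Type*} [PartialOrder P]

/-- A marked poset: `A` contains all extremal (minimal or maximal) elements of `P`. -/
def IsMarkedPoset (A : Set P) : Prop := ∀ p : P, IsMin p ∨ IsMax p → p ∈ A

/-- The marked order polytope `O(P,A)_λ ⊆ ℝ^{P-A}`. -/
def markedOrderPolytope (A : Set P) (lam : P → ℝ) : Set ({p : P // p ∉ A} → ℝ) :=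
  {x | (∀ p q : {p : P // p ∉ A}, (p : P) < (q : P) → x p ≤ x q) ∧
       (∀ a ∈ A, ∀ p : {p : P // p ∉ A}, a < (p : P) → lam a ≤ x p) ∧
       (∀ a ∈ A, ∀ p : {p : P // p ∉ A}, (p : P) < a → x p ≤ lam a)}

/-- The marked chain polytope `C(P,A)_λ ⊆ ℝ^{P-A}`. -/
def markedChainPolytope (A : Set P) (lam : P → ℝ) : Set ({p : P // p ∉ A} → ℝ) :=
  {x | (∀ p, 0 ≤ x p) ∧
       ∀ a ∈ A, ∀ b ∈ A, ∀ (k : ℕ) (c : Fin (k + 1) → {p : P // p ∉ A}),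
         StrictMono c → a < (c 0 : P) → (c (Fin.last k) : P) < b →
         ∑ i, x (c i) ≤ lam b - lam a}

/-- The transfer map `φ̃`: `φ̃(x)_p` is the minimum of `x_p - x_q` over covers `q ⋖ p`,
where `x_q` is read as `λ_q` when `q ∈ A`. -/
noncomputable def transferMap (A : Set P) (lam : P → ℝ)
    (x : {p : P // p ∉ A} → ℝ) : {p : P // p ∉ A} → ℝ := fun p =>
  sInf ({v | ∃ q : {p : P // p ∉ A}, (q : P) ⋖ (p : P) ∧ v = x p - x q} ∪
        {v | ∃ a ∈ A, a ⋖ (p : P) ∧ v = x p - lam a})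

open scoped Classical in
/-- The map `ψ`, defined recursively going up the poset:
`ψ(y)_p = λ_p` for `p ∈ A`, and `ψ(y)_p = y_p + max {ψ(y)_q : p ≻ q}` for `p ∉ A`. -/
noncomputable def psiFull [Finite P] (A : Set P) (lam : P → ℝ)
    (y : {p : P // p ∉ A} → ℝ) : P → ℝ :=
  WellFounded.fix wellFounded_lt (fun p ih =>
    if h : p ∈ A then lam p
    else y ⟨p, h⟩ + sSup {v | ∃ q, ∃ hq : q ⋖ p, v = ih q hq.lt})

/-- `ψ̃(y)`: the restriction of `ψ(y)` to the coordinates in `P - A`. -/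
noncomputable def psiTilde [Finite P] (A : Set P) (lam : P → ℝ)
    (y : {p : P // p ∉ A} → ℝ) : {p : P // p ∉ A} → ℝ :=
  fun p => psiFull A lam y p

end Marked


variable {P : Type*} [PartialOrder P]

open scoped Classical in
/-- The full vector on `P` extending `x` by `lam` on `A`. -/
noncomputable def xFullAux (A : Set P) (lam : P → ℝ) (x : {p : P // p ∉ A} → ℝ) (p : P) : ℝ :=
  if h : p ∈ A then lam p else x ⟨p, h⟩

open scoped Classical in
lemma psiFull_eq [Finite P] (A : Set P) (lam : P → ℝ) (y : {p : P // p ∉ A} → ℝ) (p : P) :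
    psiFull A lam y p = if h : p ∈ A then lam p
      else y ⟨p, h⟩ + sSup {v | ∃ q, q ⋖ p ∧ v = psiFull A lam y q} := by
  rw [psiFull, WellFounded.fix_eq]
  congr 1
  simp only [exists_prop]

lemma sInf_const_sub_of_finite {S : Set ℝ} (hne : S.Nonempty) (hfin : S.Finite) (c : ℝ) :
    sInf ((fun t => c - t) '' S) = c - sSup S := by
  apply IsLeast.csInf_eq
  constructor
  · exact ⟨sSup S, hne.csSup_mem hfin, rfl⟩
  · rintro _ ⟨t, ht, rfl⟩
    exact sub_le_sub_left (le_csSup hfin.bddAbove ht) c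

open scoped Classical in
lemma psiFull_transferMap [Fintype P] (A : Set P) (lam : P → ℝ)
    (hA : IsMarkedPoset A) (x : {p : P // p ∉ A} → ℝ) (p : P) :
    psiFull A lam (transferMap A lam x) p = xFullAux A lam x p := by
  induction p using (wellFounded_lt (α := P)).induction with
  | _ p ih =>
  rw [psiFull_eq, xFullAux]
  by_cases hp : p ∈ A
  · simp [hp]
  · simp only [hp, dif_neg, not_false_iff]
    -- rewrite the sup set using ih
    have hset : {v | ∃ q, q ⋖ p ∧ v = psiFull A lam (transferMap A lam x) q}
        = xFullAux A lam x '' {q | q ⋖ p} := by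
      ext v
      constructor
      · rintro ⟨q, hq, rfl⟩
        exact ⟨q, hq, (ih q hq.lt).symm⟩
      · rintro ⟨q, hq, rfl⟩
        exact ⟨q, hq, (ih q hq.lt).symm⟩
    -- the set of covers is nonempty
    have hne : {q : P | q ⋖ p}.Nonempty := by
      have hmin : ¬ IsMin p := fun h => hp (hA p (Or.inl h))
      obtain ⟨q, hq⟩ := not_isMin_iff.mp hmin
      obtain ⟨r, _, hr⟩ := exists_le_covBy_of_lt hq
      exact ⟨r, hr⟩
    have hne' : (xFullAux A lam x '' {q | q ⋖ p}).Nonempty := hne.image _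
    have hfin : (xFullAux A lam x '' {q | q ⋖ p}).Finite :=
      (Set.toFinite _).image _
    -- compute the transfer map value
    have htrans : transferMap A lam x ⟨p, hp⟩
        = x ⟨p, hp⟩ - sSup (xFullAux A lam x '' {q | q ⋖ p}) := by
      rw [transferMap]
      have : ({v | ∃ q : {p : P // p ∉ A}, (q : P) ⋖ ((⟨p, hp⟩ : {p : P // p ∉ A}) : P) ∧ v = x ⟨p, hp⟩ - x q} ∪
          {v | ∃ a ∈ A, a ⋖ ((⟨p, hp⟩ : {p : P // p ∉ A}) : P) ∧ v = x ⟨p, hp⟩ - lam a})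
          = (fun t => x ⟨p, hp⟩ - t) '' (xFullAux A lam x '' {q | q ⋖ p}) := by
        ext v
        constructor
        · rintro (⟨q, hq, rfl⟩ | ⟨a, ha, haq, rfl⟩)
          · refine ⟨xFullAux A lam x q, ⟨q, hq, rfl⟩, ?_⟩
            rw [xFullAux, dif_neg q.2]
          · refine ⟨xFullAux A lam x a, ⟨a, haq, rfl⟩, ?_⟩
            rw [xFullAux, dif_pos ha]
        · rintro ⟨_, ⟨q, hq, rfl⟩, rfl⟩
          by_cases hqA : q ∈ A
          · exact Or.inr ⟨q, hqA, hq, by rw [xFullAux, dif_pos hqA]⟩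
          · exact Or.inl ⟨⟨q, hqA⟩, hq, by rw [xFullAux, dif_neg hqA]⟩
      rw [this, sInf_const_sub_of_finite hne' hfin]
    rw [hset, htrans]
    ring

/-- `ψ̃ ∘ φ̃` is the identity on the marked order polytope. -/
theorem psiTilde_transferMap [Fintype P] (A : Set P) (lam : P → ℝ)
    (hA : IsMarkedPoset A) :
    ∀ x ∈ markedOrderPolytope A lam, psiTilde A lam (transferMap A lam x) = x := by
  intro x _
  funext p
  rw [psiTilde, psiFull_transferMap A lam hA, xFullAux, dif_neg p.2]
end

section
/- If λ ∈ Z^A, then the marked order polytope O(P,A)_λ and the marked chain polytope C(P,A)_λ contain the same number of integer lattice points. -/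
open Finset Set

section ABS

open Finset Set

variable {P : Type*} [PartialOrder P] [Fintype P]

/-- The set of "lower values" seen from `p`: markings of marked elements below `p`,
together with values of `x` at free elements below `p`. -/
def lowSet (A : Set P) (lam : P → ℝ) (x : {p : P // p ∉ A} → ℝ)
    (p : {p : P // p ∉ A}) : Set ℝ :=
  {v | ∃ a ∈ A, a < (p : P) ∧ v = lam a} ∪ {v | ∃ q, q < p ∧ v = x q}

lemma lowSet_finite (A : Set P) (lam : P → ℝ) (x : {p : P // p ∉ A} → ℝ)
    (p : {p : P // p ∉ A}) : (lowSet A lam x p).Finite := by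
  apply Set.Finite.subset ((Set.finite_range lam).union (Set.finite_range x))
  rintro v (⟨a, _, _, rfl⟩ | ⟨q, _, rfl⟩)
  · exact Or.inl ⟨a, rfl⟩
  · exact Or.inr ⟨q, rfl⟩

lemma exists_marked_lt {A : Set P} (hA : IsMarkedPoset A) (p : {p : P // p ∉ A}) :
    ∃ a ∈ A, a < (p : P) := by
  obtain ⟨m, hm, hmin⟩ := exists_minimal_le_of_wellFoundedLT (fun _ : P => True) (p : P) trivial
  have hmMin : IsMin m := fun c hc => hmin.2 trivial hc
  have hmA : m ∈ A := hA m (Or.inl hmMin)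
  refine ⟨m, hmA, lt_of_le_of_ne hm ?_⟩
  rintro rfl
  exact p.2 hmA

lemma lowSet_nonempty {A : Set P} (hA : IsMarkedPoset A) (lam : P → ℝ)
    (x : {p : P // p ∉ A} → ℝ) (p : {p : P // p ∉ A}) : (lowSet A lam x p).Nonempty := by
  obtain ⟨a, ha, hlt⟩ := exists_marked_lt hA p
  exact ⟨lam a, Or.inl ⟨a, ha, hlt, rfl⟩⟩

/-- The transfer map (down-set version). -/
noncomputable def myPhi (A : Set P) (lam : P → ℝ) (x : {p : P // p ∉ A} → ℝ) :
    {p : P // p ∉ A} → ℝ :=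
  fun p => x p - sSup (lowSet A lam x p)

/-- The inverse transfer map, defined by well-founded recursion. -/
noncomputable def myPsi (A : Set P) (lam : P → ℝ) (y : {p : P // p ∉ A} → ℝ) :
    {p : P // p ∉ A} → ℝ :=
  WellFounded.fix wellFounded_lt (fun p ih =>
    y p + sSup ({v | ∃ a ∈ A, a < (p : P) ∧ v = lam a} ∪
                {v | ∃ q, ∃ h : q < p, v = ih q h}))

lemma myPsi_apply (A : Set P) (lam : P → ℝ) (y : {p : P // p ∉ A} → ℝ)
    (p : {p : P // p ∉ A}) :
    myPsi A lam y p = y p + sSup (lowSet A lam (myPsi A lam y) p) := by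
  conv_lhs => rw [myPsi, WellFounded.fix_eq]
  rw [← myPsi]
  congr 2
  unfold lowSet
  congr 1
  ext v
  constructor
  · rintro ⟨q, h, rfl⟩; exact ⟨q, h, rfl⟩
  · rintro ⟨q, h, rfl⟩; exact ⟨q, h, rfl⟩

lemma myPhi_myPsi (A : Set P) (lam : P → ℝ) (y : {p : P // p ∉ A} → ℝ) :
    myPhi A lam (myPsi A lam y) = y := by
  funext p
  rw [myPhi, myPsi_apply]
  ring

lemma myPsi_myPhi (A : Set P) (lam : P → ℝ) (x : {p : P // p ∉ A} → ℝ) :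
    myPsi A lam (myPhi A lam x) = x := by
  funext p
  induction p using WellFoundedLT.induction with
  | _ p ih =>
    rw [myPsi_apply]
    have hset : lowSet A lam (myPsi A lam (myPhi A lam x)) p = lowSet A lam x p := by
      unfold lowSet
      congr 1
      ext v
      constructor
      · rintro ⟨q, h, rfl⟩; exact ⟨q, h, ih q h⟩
      · rintro ⟨q, h, rfl⟩; exact ⟨q, h, (ih q h).symm⟩
    rw [hset, myPhi]
    ring

end ABS


section ABS2

open Finset Set

variable {P : Type*} [PartialOrder P] [Fintype P]

lemma myPhi_mem {A : Set P} {lam : P → ℝ} (hA : IsMarkedPoset A)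
    (hint : ∀ a ∈ A, ∃ z : ℤ, lam a = z) {x : {p : P // p ∉ A} → ℝ}
    (hx : x ∈ markedOrderPolytope A lam ∩ {x | ∀ p, ∃ z : ℤ, x p = (z : ℝ)}) :
    myPhi A lam x ∈ markedChainPolytope A lam ∩ {x | ∀ p, ∃ z : ℤ, x p = (z : ℝ)} := by
  obtain ⟨⟨hmono, hlow, hupp⟩, hxz⟩ := hx
  have hbdd : ∀ p, BddAbove (lowSet A lam x p) := fun p => (lowSet_finite A lam x p).bddAbove
  have hne : ∀ p, (lowSet A lam x p).Nonempty := lowSet_nonempty hA lam x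
  have hsup_mem : ∀ p, sSup (lowSet A lam x p) ∈ lowSet A lam x p :=
    fun p => (hne p).csSup_mem (lowSet_finite A lam x p)
  have hle : ∀ p, sSup (lowSet A lam x p) ≤ x p := by
    intro p
    apply csSup_le (hne p)
    rintro v (⟨a, ha, hlt, rfl⟩ | ⟨q, hq, rfl⟩)
    · exact hlow a ha p hlt
    · exact hmono q p (Subtype.coe_lt_coe.mpr hq)
  refine ⟨⟨fun p => sub_nonneg.mpr (hle p), ?_⟩, ?_⟩
  · intro a ha b hb k c hc hac hcb
    set d : ℕ → {p : P // p ∉ A} := fun n => c ⟨min n k, by omega⟩ with hd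
    have hdc : ∀ i : Fin (k + 1), c i = d (i : ℕ) := by
      intro i
      have : (⟨min (i : ℕ) k, by omega⟩ : Fin (k + 1)) = i := by
        apply Fin.ext
        simp [Nat.min_eq_left (Nat.lt_succ_iff.mp i.isLt)]
      rw [hd]
      simp only [this]
    have key : ∀ n, n ≤ k → ∑ j ∈ Finset.range (n + 1), myPhi A lam x (d j)
        ≤ x (d n) - lam a := by
      intro n
      induction n with
      | zero =>
        intro _
        rw [Finset.sum_range_one]
        have hmem : lam a ∈ lowSet A lam x (d 0) := by
          refine Or.inl ⟨a, ha, ?_, rfl⟩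
          have : d 0 = c 0 := (hdc 0).symm
          rw [this]
          exact hac
        have := le_csSup (hbdd (d 0)) hmem
        show x (d 0) - sSup (lowSet A lam x (d 0)) ≤ x (d 0) - lam a
        linarith
      | succ n ihn =>
        intro hn
        have hdn : d n < d (n + 1) := by
          rw [hd]
          apply hc
          simp [Fin.lt_iff_val_lt_val]
          omega
        have hmem : x (d n) ∈ lowSet A lam x (d (n + 1)) := Or.inr ⟨d n, hdn, rfl⟩
        have h2 := le_csSup (hbdd (d (n + 1))) hmem
        have h3 : myPhi A lam x (d (n + 1)) ≤ x (d (n + 1)) - x (d n) := by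
          show x (d (n+1)) - sSup (lowSet A lam x (d (n+1))) ≤ _
          linarith
        rw [Finset.sum_range_succ]
        have := ihn (by omega)
        linarith
    have hsum : ∑ i, myPhi A lam x (c i)
        = ∑ j ∈ Finset.range (k + 1), myPhi A lam x (d j) := by
      rw [← Fin.sum_univ_eq_sum_range (fun n => myPhi A lam x (d n)) (k + 1)]
      exact Finset.sum_congr rfl (fun i _ => by rw [hdc i])
    have hlast : d k = c (Fin.last k) := (hdc (Fin.last k)).symm
    have hub : x (d k) ≤ lam b := by
      rw [hlast]; exact hupp b hb _ hcb
    have := key k le_rfl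
    rw [hsum]
    linarith
  · intro p
    rcases hsup_mem p with ⟨a, ha, _, heq⟩ | ⟨q, _, heq⟩
    · obtain ⟨z1, hz1⟩ := hint a ha
      obtain ⟨z2, hz2⟩ := hxz p
      exact ⟨z2 - z1, by show x p - sSup _ = _; rw [heq, hz1, hz2]; push_cast; ring⟩
    · obtain ⟨z1, hz1⟩ := hxz q
      obtain ⟨z2, hz2⟩ := hxz p
      exact ⟨z2 - z1, by show x p - sSup _ = _; rw [heq, hz1, hz2]; push_cast; ring⟩

lemma myPsi_mem {A : Set P} {lam : P → ℝ} (hA : IsMarkedPoset A)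
    (hint : ∀ a ∈ A, ∃ z : ℤ, lam a = z) {y : {p : P // p ∉ A} → ℝ}
    (hy : y ∈ markedChainPolytope A lam ∩ {x | ∀ p, ∃ z : ℤ, x p = (z : ℝ)}) :
    myPsi A lam y ∈ markedOrderPolytope A lam ∩ {x | ∀ p, ∃ z : ℤ, x p = (z : ℝ)} := by
  obtain ⟨⟨hnn, hchain⟩, hyz⟩ := hy
  set x : {p : P // p ∉ A} → ℝ := myPsi A lam y with hxdef
  have hx_eq : ∀ p, x p = y p + sSup (lowSet A lam x p) := fun p => myPsi_apply A lam y p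
  have hbdd : ∀ p, BddAbove (lowSet A lam x p) := fun p => (lowSet_finite A lam x p).bddAbove
  have hne : ∀ p, (lowSet A lam x p).Nonempty := lowSet_nonempty hA lam x
  have hsup_mem : ∀ p, sSup (lowSet A lam x p) ∈ lowSet A lam x p :=
    fun p => (hne p).csSup_mem (lowSet_finite A lam x p)
  have key : ∀ p : {p : P // p ∉ A}, ∃ (k : ℕ) (c : Fin (k + 1) → {p : P // p ∉ A}) (a : P),
      StrictMono c ∧ a ∈ A ∧ a < (c 0 : P) ∧ c (Fin.last k) = p ∧
      x p = lam a + ∑ i, y (c i) := by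
    intro p
    induction p using WellFoundedLT.induction with
    | _ p ih =>
      rcases hsup_mem p with ⟨a, ha, hlt, heq⟩ | ⟨q, hq, heq⟩
      · refine ⟨0, fun _ => p, a, ?_, ha, hlt, rfl, ?_⟩
        · intro i j hij
          exact absurd (Fin.lt_iff_val_lt_val.mp hij) (by omega)
        · rw [hx_eq p, heq, Fin.sum_univ_one]; ring
      · obtain ⟨k, c, a, hc, ha, hac, hclast, hval⟩ := ih q hq
        have hltp : ∀ i : Fin (k + 1), c i < p := by
          intro i
          have h1 : c i ≤ c (Fin.last k) := hc.monotone (Fin.le_last i)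
          rw [hclast] at h1
          exact lt_of_le_of_lt h1 hq
        refine ⟨k + 1, Fin.snoc c p, a, ?_, ha, ?_, ?_, ?_⟩
        · intro i j hij
          rcases Fin.eq_castSucc_or_eq_last j with ⟨j', rfl⟩ | rfl
          · rcases Fin.eq_castSucc_or_eq_last i with ⟨i', rfl⟩ | rfl
            · rw [Fin.snoc_castSucc, Fin.snoc_castSucc]
              exact hc (Fin.castSucc_lt_castSucc_iff.mp hij)
            · exact absurd (hij.trans (Fin.castSucc_lt_last j')) (lt_irrefl _)
          · rcases Fin.eq_castSucc_or_eq_last i with ⟨i', rfl⟩ | rfl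
            · rw [Fin.snoc_castSucc, Fin.snoc_last]
              exact hltp i'
            · exact absurd hij (lt_irrefl _)
        · have h0 : (Fin.snoc c p : Fin (k + 2) → _) 0 = c 0 := by
            have : (0 : Fin (k + 2)) = Fin.castSucc 0 := rfl
            rw [this, Fin.snoc_castSucc]
          rw [h0]
          exact hac
        · exact Fin.snoc_last ..
        · have hsnocsum : ∑ i : Fin (k + 1 + 1), y ((Fin.snoc c p : Fin (k + 1 + 1) → _) i)
              = (∑ i : Fin (k + 1), y (c i)) + y p := by
            rw [Fin.sum_univ_castSucc]
            simp
          rw [hx_eq p, heq, hval, hsnocsum]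
          ring
  refine ⟨⟨?_, ?_, ?_⟩, ?_⟩
  · intro p q hpq
    have hmem : x p ∈ lowSet A lam x q := Or.inr ⟨p, Subtype.coe_lt_coe.mp hpq, rfl⟩
    have := le_csSup (hbdd q) hmem
    have := hnn q
    rw [hx_eq q]
    linarith
  · intro a ha p hlt
    have hmem : lam a ∈ lowSet A lam x p := Or.inl ⟨a, ha, hlt, rfl⟩
    have := le_csSup (hbdd p) hmem
    have := hnn p
    rw [hx_eq p]
    linarith
  · intro b hb p hlt
    obtain ⟨k, c, a, hc, ha, hac, hclast, hval⟩ := key p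
    have := hchain a ha b hb k c hc hac (by rw [hclast]; exact hlt)
    rw [hval]
    linarith
  · intro p
    induction p using WellFoundedLT.induction with
    | _ p ih =>
      obtain ⟨z0, hz0⟩ := hyz p
      rcases hsup_mem p with ⟨a, ha, _, heq⟩ | ⟨q, hq, heq⟩
      · obtain ⟨z1, hz1⟩ := hint a ha
        exact ⟨z0 + z1, by rw [hx_eq p, heq, hz0, hz1]; push_cast; ring⟩
      · obtain ⟨z1, hz1⟩ := ih q hq
        exact ⟨z0 + z1, by rw [hx_eq p, heq, hz1, hz0]; push_cast; ring⟩

end ABS2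


variable {P : Type*} [PartialOrder P]

/-- For integral markings, the marked order polytope and the marked chain polytope
contain the same number of integer lattice points. -/
theorem card_lattice_points_eq [Fintype P] (A : Set P) (lam : P → ℝ)
    (hA : IsMarkedPoset A) (hint : ∀ a ∈ A, ∃ z : ℤ, lam a = z) :
    (markedOrderPolytope A lam ∩ {x | ∀ p, ∃ z : ℤ, x p = (z : ℝ)}).ncard =
    (markedChainPolytope A lam ∩ {x | ∀ p, ∃ z : ℤ, x p = (z : ℝ)}).ncard := by
  classical
  have hinj : Set.InjOn (myPhi A lam)
      (markedOrderPolytope A lam ∩ {x | ∀ p, ∃ z : ℤ, x p = (z : ℝ)}) := by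
    intro u _ v _ h
    rw [← myPsi_myPhi A lam u, ← myPsi_myPhi A lam v, h]
  have himg : myPhi A lam '' (markedOrderPolytope A lam ∩ {x | ∀ p, ∃ z : ℤ, x p = (z : ℝ)})
      = markedChainPolytope A lam ∩ {x | ∀ p, ∃ z : ℤ, x p = (z : ℝ)} := by
    apply subset_antisymm
    · rintro _ ⟨u, hu, rfl⟩
      exact myPhi_mem hA hint hu
    · intro y hy
      exact ⟨myPsi A lam y, myPsi_mem hA hint hy, myPhi_myPsi A lam y⟩
  rw [← himg, Set.ncard_image_of_injOn hinj]
end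

section
/- For every positive integer n, dilating the marking dilates the polytopes: O(P,A)_{nλ} = n·O(P,A)_λ and C(P,A)_{nλ} = n·C(P,A)_λ. Consequently, if λ ∈ Z^A, then for every n the number of lattice points in n·O(P,A)_λ equals the number of lattice points in n·C(P,A)_λ; i.e., the two polytopes have the same Ehrhart counting function. -/
open Finset Set
open scoped Pointwise

section AuxDev
open scoped Classical
variable {P : Type*} [PartialOrder P] [Fintype P]

noncomputable def extFun (A : Set P) (lam : P → ℝ) (x : {p : P // p ∉ A} → ℝ) : P → ℝ :=
  fun p => if h : p ∈ A then lam p else x ⟨p, h⟩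

noncomputable def PhiMap (A : Set P) (lam : P → ℝ) (x : {p : P // p ∉ A} → ℝ) :
    {p : P // p ∉ A} → ℝ :=
  fun p => x p - sSup (extFun A lam x '' {q | q < (p : P)})

noncomputable def PsiF (A : Set P) (lam : P → ℝ) (y : {p : P // p ∉ A} → ℝ) : P → ℝ :=
  WellFounded.fix wellFounded_lt (fun p ih =>
    if h : p ∈ A then lam p else y ⟨p, h⟩ + sSup {v | ∃ q, ∃ hq : q < p, v = ih q hq})

noncomputable def PsiT (A : Set P) (lam : P → ℝ) (y : {p : P // p ∉ A} → ℝ) :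
    {p : P // p ∉ A} → ℝ := fun p => PsiF A lam y p

lemma PsiF_eq (A : Set P) (lam : P → ℝ) (y : {p : P // p ∉ A} → ℝ) (p : P) :
    PsiF A lam y p = if h : p ∈ A then lam p
      else y ⟨p, h⟩ + sSup (PsiF A lam y '' {q | q < p}) := by
  unfold PsiF
  rw [WellFounded.fix_eq]
  split_ifs with h
  · rfl
  · congr 2
    ext v
    constructor
    · rintro ⟨q, hq, rfl⟩; exact ⟨q, hq, rfl⟩
    · rintro ⟨q, hq, rfl⟩; exact ⟨q, hq, rfl⟩

lemma exists_lt_of_not_mem {A : Set P} (hA : IsMarkedPoset A) {p : P} (hp : p ∉ A) :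
    ∃ q, q < p := by
  by_contra hc
  push_neg at hc
  apply hp
  apply hA p (Or.inl ?_)
  intro b hb
  rcases hb.lt_or_eq with h' | h'
  · exact absurd h' (hc b)
  · exact h'.ge

lemma extFun_coe (A : Set P) (lam : P → ℝ) (x : {p : P // p ∉ A} → ℝ)
    (p : {p : P // p ∉ A}) : extFun A lam x ↑p = x p := by
  unfold extFun
  rw [dif_neg p.2]

lemma extFun_le {A : Set P} {lam : P → ℝ} {x : {p : P // p ∉ A} → ℝ}
    (hx : x ∈ markedOrderPolytope A lam) (p : {p : P // p ∉ A}) {q : P} (hq : q < ↑p) :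
    extFun A lam x q ≤ x p := by
  obtain ⟨h1, h2, h3⟩ := hx
  unfold extFun
  split_ifs with h
  · exact h2 q h p hq
  · exact h1 ⟨q, h⟩ p hq

lemma PhiMap_le (A : Set P) (lam : P → ℝ) (x : {p : P // p ∉ A} → ℝ)
    (p : {p : P // p ∉ A}) {q : P} (hq : q < ↑p) :
    PhiMap A lam x p ≤ x p - extFun A lam x q := by
  have h : extFun A lam x q ≤ sSup (extFun A lam x '' {q | q < (p : P)}) :=
    le_csSup ((Set.toFinite _).bddAbove) ⟨q, hq, rfl⟩
  unfold PhiMap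
  linarith

lemma PhiMap_nonneg {A : Set P} {lam : P → ℝ} {x : {p : P // p ∉ A} → ℝ}
    (hA : IsMarkedPoset A) (hx : x ∈ markedOrderPolytope A lam)
    (p : {p : P // p ∉ A}) : 0 ≤ PhiMap A lam x p := by
  obtain ⟨q, hq⟩ := exists_lt_of_not_mem hA p.2
  have h1 : sSup (extFun A lam x '' {q | q < (p : P)}) ≤ x p := by
    have hne : (extFun A lam x '' {q | q < (p : P)}).Nonempty := ⟨_, ⟨q, hq, rfl⟩⟩
    apply csSup_le hne
    rintro v ⟨r, hr, rfl⟩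
    exact extFun_le hx p hr
  unfold PhiMap
  linarith

lemma sum_PhiMap_le {A : Set P} {lam : P → ℝ} {x : {p : P // p ∉ A} → ℝ}
    (hx : x ∈ markedOrderPolytope A lam) {a : P} (ha : a ∈ A) :
    ∀ (k : ℕ) (c : Fin (k + 1) → {p : P // p ∉ A}), StrictMono c → a < ↑(c 0) →
      ∑ i, PhiMap A lam x (c i) ≤ x (c (Fin.last k)) - lam a := by
  intro k
  induction k with
  | zero =>
    intro c _ h0
    rw [Fin.sum_univ_one]
    have := PhiMap_le A lam x (c 0) h0
    have he : extFun A lam x a = lam a := dif_pos ha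
    rw [he] at this
    exact this
  | succ k ih =>
    intro c hc h0
    have hc' : StrictMono (fun i : Fin (k + 1) => c i.castSucc) :=
      hc.comp (fun _ _ h => h)
    have h0' : a < ↑((fun i : Fin (k + 1) => c i.castSucc) 0) := by
      simpa using h0
    have hsum := ih _ hc' h0'
    rw [Fin.sum_univ_castSucc]
    have hlt : (↑(c (Fin.castSucc (Fin.last k))) : P) < ↑(c (Fin.last (k + 1))) :=
      hc (Fin.castSucc_lt_last _)
    have h2 := PhiMap_le A lam x (c (Fin.last (k + 1))) hlt
    rw [extFun_coe] at h2
    linarith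

lemma PhiMap_mem_chain {A : Set P} {lam : P → ℝ} {x : {p : P // p ∉ A} → ℝ}
    (hA : IsMarkedPoset A) (hx : x ∈ markedOrderPolytope A lam) :
    PhiMap A lam x ∈ markedChainPolytope A lam := by
  refine ⟨PhiMap_nonneg hA hx, ?_⟩
  intro a ha b hb k c hc h0 hl
  have h1 := sum_PhiMap_le hx ha k c hc h0
  have h2 : x (c (Fin.last k)) ≤ lam b := hx.2.2 b hb _ hl
  linarith

lemma PsiF_PhiMap (A : Set P) (lam : P → ℝ) (x : {p : P // p ∉ A} → ℝ) (p : P) :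
    PsiF A lam (PhiMap A lam x) p = extFun A lam x p := by
  induction p using WellFoundedLT.induction with
  | ind p ih =>
    rw [PsiF_eq]
    unfold extFun
    split_ifs with h
    · rfl
    · have himg : PsiF A lam (PhiMap A lam x) '' {q | q < p} =
          extFun A lam x '' {q | q < p} := Set.image_congr fun q hq => ih q hq
      rw [himg]
      show PhiMap A lam x ⟨p, h⟩ + _ = _
      unfold PhiMap
      ring_nf

lemma extFun_PsiT (A : Set P) (lam : P → ℝ) (y : {p : P // p ∉ A} → ℝ) :
    extFun A lam (PsiT A lam y) = PsiF A lam y := by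
  funext p
  unfold extFun PsiT
  split_ifs with h
  · rw [PsiF_eq, dif_pos h]
  · rfl

lemma PhiMap_PsiT (A : Set P) (lam : P → ℝ) (y : {p : P // p ∉ A} → ℝ)
    (p : {p : P // p ∉ A}) : PhiMap A lam (PsiT A lam y) p = y p := by
  unfold PhiMap
  rw [extFun_PsiT]
  show PsiF A lam y ↑p - _ = _
  rw [PsiF_eq, dif_neg p.2]
  simp

lemma PsiF_rep {A : Set P} (hA : IsMarkedPoset A) (lam : P → ℝ)
    (y : {p : P // p ∉ A} → ℝ) (p : P) :
    ∀ hp : p ∉ A, ∃ a ∈ A, ∃ k, ∃ c : Fin (k + 1) → {p : P // p ∉ A},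
      StrictMono c ∧ a < ↑(c 0) ∧ c (Fin.last k) = ⟨p, hp⟩ ∧
      PsiF A lam y p = lam a + ∑ i, y (c i) := by
  induction p using WellFoundedLT.induction with
  | ind p ih =>
    intro hp
    have hval := PsiF_eq A lam y p
    rw [dif_neg hp] at hval
    obtain ⟨q1, hq1⟩ := exists_lt_of_not_mem hA hp
    have hne : (PsiF A lam y '' {q | q < p}).Nonempty := ⟨_, q1, hq1, rfl⟩
    obtain ⟨q0, hq0lt, hq0⟩ := hne.csSup_mem (Set.toFinite _)
    by_cases hq0A : q0 ∈ A
    · refine ⟨q0, hq0A, 0, fun _ => ⟨p, hp⟩, ?_, hq0lt, rfl, ?_⟩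
      · intro i j hij
        exact absurd (Fin.lt_iff_val_lt_val.mp hij) (by omega)
      · rw [hval, ← hq0, PsiF_eq, dif_pos hq0A, Fin.sum_univ_one]
        ring
    · obtain ⟨a, ha, k, c, hmono, h0, hlast, hv⟩ := ih q0 hq0lt hq0A
      refine ⟨a, ha, k + 1, Fin.snoc c ⟨p, hp⟩, ?_, ?_, Fin.snoc_last _ _, ?_⟩
      · intro i j hij
        rcases Fin.eq_castSucc_or_eq_last j with ⟨j', rfl⟩ | rfl
        · rcases Fin.eq_castSucc_or_eq_last i with ⟨i', rfl⟩ | rfl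
          · rw [Fin.snoc_castSucc, Fin.snoc_castSucc]
            exact hmono (Fin.castSucc_lt_castSucc_iff.mp hij)
          · exact absurd hij (Fin.castSucc_lt_last j').asymm
        · rcases Fin.eq_castSucc_or_eq_last i with ⟨i', rfl⟩ | rfl
          · rw [Fin.snoc_castSucc, Fin.snoc_last]
            have h1 : c i' ≤ c (Fin.last k) := hmono.monotone (Fin.le_last i')
            have h2 : c (Fin.last k) < ⟨p, hp⟩ := by
              rw [hlast]; exact Subtype.mk_lt_mk.mpr hq0lt
            exact lt_of_le_of_lt h1 h2
          · exact absurd hij (lt_irrefl _)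
      · have hz : (0 : Fin (k + 2)) = Fin.castSucc 0 := rfl
        rw [hz, Fin.snoc_castSucc]
        exact h0
      · rw [hval, ← hq0, hv,
          Fin.sum_univ_castSucc (n := k + 1) (f := fun i => y (Fin.snoc (α := fun _ => {p : P // p ∉ A}) c ⟨p, hp⟩ i))]
        simp only [Fin.snoc_castSucc, Fin.snoc_last]
        ring

lemma PsiT_mem_order {A : Set P} {lam : P → ℝ} {y : {p : P // p ∉ A} → ℝ}
    (hA : IsMarkedPoset A) (hy : y ∈ markedChainPolytope A lam) :
    PsiT A lam y ∈ markedOrderPolytope A lam := by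
  obtain ⟨hy0, hyc⟩ := hy
  refine ⟨?_, ?_, ?_⟩
  · intro p q hpq
    have h1 : PsiF A lam y ↑p ≤ sSup (PsiF A lam y '' {r | r < (q : P)}) :=
      le_csSup (Set.toFinite _).bddAbove ⟨↑p, hpq, rfl⟩
    have h2 := hy0 q
    show PsiF A lam y ↑p ≤ PsiF A lam y ↑q
    rw [PsiF_eq A lam y ↑q, dif_neg q.2]
    have hq : y ⟨↑q, q.2⟩ = y q := by congr
    linarith [hq ▸ h2]
  · intro a ha p hap
    have h1 : PsiF A lam y a ≤ sSup (PsiF A lam y '' {r | r < (p : P)}) :=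
      le_csSup (Set.toFinite _).bddAbove ⟨a, hap, rfl⟩
    have h2 : PsiF A lam y a = lam a := by rw [PsiF_eq, dif_pos ha]
    show lam a ≤ PsiF A lam y ↑p
    rw [PsiF_eq, dif_neg p.2]
    have h3 := hy0 ⟨↑p, p.2⟩
    linarith [h2 ▸ h1]
  · intro b hb p hpb
    obtain ⟨a, ha, k, c, hmono, h0, hlast, hval⟩ := PsiF_rep hA lam y ↑p p.2
    have hchain := hyc a ha b hb k c hmono h0 (by rw [hlast]; exact hpb)
    show PsiF A lam y ↑p ≤ lam b
    rw [hval]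
    linarith

lemma PhiMap_int {A : Set P} {lam : P → ℝ} {x : {p : P // p ∉ A} → ℝ}
    (hA : IsMarkedPoset A) (hlam : ∀ a ∈ A, ∃ z : ℤ, lam a = z)
    (hx : ∀ p, ∃ z : ℤ, x p = z) (p : {p : P // p ∉ A}) :
    ∃ z : ℤ, PhiMap A lam x p = z := by
  obtain ⟨q, hq⟩ := exists_lt_of_not_mem hA p.2
  have hne : (extFun A lam x '' {q | q < (p : P)}).Nonempty := ⟨_, q, hq, rfl⟩
  obtain ⟨r, hr, hval⟩ := hne.csSup_mem (Set.toFinite _)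
  obtain ⟨z1, hz1⟩ := hx p
  have h2 : ∃ z : ℤ, extFun A lam x r = z := by
    unfold extFun
    split_ifs with h
    exacts [hlam r h, hx ⟨r, h⟩]
  obtain ⟨z2, hz2⟩ := h2
  refine ⟨z1 - z2, ?_⟩
  unfold PhiMap
  rw [← hval, hz1, hz2]
  push_cast
  ring

lemma PsiF_int {A : Set P} {lam : P → ℝ} {y : {p : P // p ∉ A} → ℝ}
    (hA : IsMarkedPoset A) (hlam : ∀ a ∈ A, ∃ z : ℤ, lam a = z)
    (hy : ∀ p, ∃ z : ℤ, y p = z) (p : P) : ∃ z : ℤ, PsiF A lam y p = z := by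
  induction p using WellFoundedLT.induction with
  | ind p ih =>
    rw [PsiF_eq]
    split_ifs with h
    · exact hlam p h
    · obtain ⟨q1, hq1⟩ := exists_lt_of_not_mem hA h
      have hne : (PsiF A lam y '' {q | q < p}).Nonempty := ⟨_, q1, hq1, rfl⟩
      obtain ⟨q0, hq0lt, hq0⟩ := hne.csSup_mem (Set.toFinite _)
      obtain ⟨z1, hz1⟩ := hy ⟨p, h⟩
      obtain ⟨z2, hz2⟩ := ih q0 hq0lt
      refine ⟨z1 + z2, ?_⟩
      rw [← hq0, hz1, hz2]
      push_cast
      ring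

lemma ncard_lattice_eq {A : Set P} (hA : IsMarkedPoset A) (lam : P → ℝ)
    (hlam : ∀ a ∈ A, ∃ z : ℤ, lam a = z) :
    (markedOrderPolytope A lam ∩ {x | ∀ p, ∃ z : ℤ, x p = (z : ℝ)}).ncard =
    (markedChainPolytope A lam ∩ {x | ∀ p, ∃ z : ℤ, x p = (z : ℝ)}).ncard := by
  have hleft : ∀ x : {p : P // p ∉ A} → ℝ, PsiT A lam (PhiMap A lam x) = x := by
    intro x
    funext p
    show PsiF A lam (PhiMap A lam x) ↑p = x p
    rw [PsiF_PhiMap]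
    exact extFun_coe A lam x p
  have hinj : Function.Injective (PhiMap A lam) := Function.LeftInverse.injective hleft
  have himg : PhiMap A lam '' (markedOrderPolytope A lam ∩ {x | ∀ p, ∃ z : ℤ, x p = (z : ℝ)})
      = markedChainPolytope A lam ∩ {x | ∀ p, ∃ z : ℤ, x p = (z : ℝ)} := by
    apply Set.Subset.antisymm
    · rintro _ ⟨x, ⟨hxO, hxZ⟩, rfl⟩
      exact ⟨PhiMap_mem_chain hA hxO, fun p => PhiMap_int hA hlam hxZ p⟩
    · rintro y ⟨hyC, hyZ⟩
      refine ⟨PsiT A lam y, ⟨PsiT_mem_order hA hyC, fun p => PsiF_int hA hlam hyZ ↑p⟩, ?_⟩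
      funext p
      exact PhiMap_PsiT A lam y p
  rw [← himg, Set.ncard_image_of_injOn hinj.injOn]


lemma order_dilate (A : Set P) (lam : P → ℝ) (n : ℕ) (hn : 0 < n) :
    markedOrderPolytope A (fun a => (n : ℝ) * lam a) =
      (n : ℝ) • markedOrderPolytope A lam := by
  have hn0 : (0 : ℝ) < (n : ℝ) := by exact_mod_cast hn
  have hne : (n : ℝ) ≠ 0 := ne_of_gt hn0
  ext x
  rw [Set.mem_smul_set_iff_inv_smul_mem₀ hne]
  have hsm : ∀ p, ((n : ℝ)⁻¹ • x) p = (n : ℝ)⁻¹ * x p := fun p => rfl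
  constructor
  · rintro ⟨h1, h2, h3⟩
    refine ⟨?_, ?_, ?_⟩
    · intro p q hpq
      rw [hsm, hsm]
      exact mul_le_mul_of_nonneg_left (h1 p q hpq) (by positivity)
    · intro a ha p hap
      rw [hsm]
      calc lam a = (n : ℝ)⁻¹ * ((n : ℝ) * lam a) := by field_simp
        _ ≤ (n : ℝ)⁻¹ * x p := mul_le_mul_of_nonneg_left (h2 a ha p hap) (by positivity)
    · intro a ha p hpa
      rw [hsm]
      calc (n : ℝ)⁻¹ * x p ≤ (n : ℝ)⁻¹ * ((n : ℝ) * lam a) :=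
            mul_le_mul_of_nonneg_left (h3 a ha p hpa) (by positivity)
        _ = lam a := by field_simp
  · rintro ⟨h1, h2, h3⟩
    refine ⟨?_, ?_, ?_⟩
    · intro p q hpq
      have h := h1 p q hpq
      rw [hsm, hsm] at h
      calc x p = (n : ℝ) * ((n : ℝ)⁻¹ * x p) := by field_simp
        _ ≤ (n : ℝ) * ((n : ℝ)⁻¹ * x q) := mul_le_mul_of_nonneg_left h hn0.le
        _ = x q := by field_simp
    · intro a ha p hap
      have h := h2 a ha p hap
      rw [hsm] at h
      calc (n : ℝ) * lam a ≤ (n : ℝ) * ((n : ℝ)⁻¹ * x p) :=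
            mul_le_mul_of_nonneg_left h hn0.le
        _ = x p := by field_simp
    · intro a ha p hpa
      have h := h3 a ha p hpa
      rw [hsm] at h
      calc x p = (n : ℝ) * ((n : ℝ)⁻¹ * x p) := by field_simp
        _ ≤ (n : ℝ) * lam a := mul_le_mul_of_nonneg_left h hn0.le

lemma chain_dilate (A : Set P) (lam : P → ℝ) (n : ℕ) (hn : 0 < n) :
    markedChainPolytope A (fun a => (n : ℝ) * lam a) =
      (n : ℝ) • markedChainPolytope A lam := by
  have hn0 : (0 : ℝ) < (n : ℝ) := by exact_mod_cast hn
  have hne : (n : ℝ) ≠ 0 := ne_of_gt hn0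
  have heq : ∀ u v : ℝ, (n : ℝ)⁻¹ * ((n : ℝ) * u - (n : ℝ) * v) = u - v := by
    intro u v; field_simp
  ext x
  rw [Set.mem_smul_set_iff_inv_smul_mem₀ hne]
  have hsm : ∀ p, ((n : ℝ)⁻¹ • x) p = (n : ℝ)⁻¹ * x p := fun p => rfl
  constructor
  · rintro ⟨h0, hc⟩
    refine ⟨fun p => by rw [hsm]; exact mul_nonneg (by positivity) (h0 p), ?_⟩
    intro a ha b hb k c hmc hc0 hcl
    have h := hc a ha b hb k c hmc hc0 hcl
    have hsum : ∑ i, ((n : ℝ)⁻¹ • x) (c i) = (n : ℝ)⁻¹ * ∑ i, x (c i) := by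
      rw [Finset.mul_sum]
      exact Finset.sum_congr rfl fun i _ => hsm (c i)
    rw [hsum]
    calc (n : ℝ)⁻¹ * ∑ i, x (c i)
        ≤ (n : ℝ)⁻¹ * ((n : ℝ) * lam b - (n : ℝ) * lam a) :=
          mul_le_mul_of_nonneg_left h (by positivity)
      _ = lam b - lam a := heq _ _
  · rintro ⟨h0, hc⟩
    refine ⟨?_, ?_⟩
    · intro p
      have h := h0 p
      rw [hsm] at h
      have h2 : (0 : ℝ) ≤ (n : ℝ) * ((n : ℝ)⁻¹ * x p) := mul_nonneg hn0.le h
      have h3 : (n : ℝ) * ((n : ℝ)⁻¹ * x p) = x p := by field_simp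
      linarith
    · intro a ha b hb k c hmc hc0 hcl
      have h := hc a ha b hb k c hmc hc0 hcl
      have hsum : ∑ i, ((n : ℝ)⁻¹ • x) (c i) = (n : ℝ)⁻¹ * ∑ i, x (c i) := by
        rw [Finset.mul_sum]
        exact Finset.sum_congr rfl fun i _ => hsm (c i)
      rw [hsum] at h
      calc ∑ i, x (c i) = (n : ℝ) * ((n : ℝ)⁻¹ * ∑ i, x (c i)) := by field_simp
        _ ≤ (n : ℝ) * (lam b - lam a) := mul_le_mul_of_nonneg_left h hn0.le
        _ = (n : ℝ) * lam b - (n : ℝ) * lam a := by ring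


end AuxDev



variable {P : Type*} [PartialOrder P]

/-- Dilating the marking dilates both polytopes; consequently, for integral markings,
the dilates `n·O(P,A)_λ` and `n·C(P,A)_λ` contain the same number of integer lattice
points for every positive integer `n` (the same Ehrhart counting function). -/
theorem marked_polytopes_dilation_and_ehrhart [Fintype P] (A : Set P) (lam : P → ℝ)
    (hA : IsMarkedPoset A) :
    (∀ n : ℕ, 0 < n →
      markedOrderPolytope A (fun a => (n : ℝ) * lam a) =
        (n : ℝ) • markedOrderPolytope A lam ∧
      markedChainPolytope A (fun a => (n : ℝ) * lam a) =
        (n : ℝ) • markedChainPolytope A lam) ∧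
    ((∀ a ∈ A, ∃ z : ℤ, lam a = z) → ∀ n : ℕ, 0 < n →
      (((n : ℝ) • markedOrderPolytope A lam) ∩ {x | ∀ p, ∃ z : ℤ, x p = (z : ℝ)}).ncard =
      (((n : ℝ) • markedChainPolytope A lam) ∩ {x | ∀ p, ∃ z : ℤ, x p = (z : ℝ)}).ncard) := by
  constructor
  · intro n hn
    exact ⟨order_dilate A lam n hn, chain_dilate A lam n hn⟩
  · intro hlam n hn
    rw [← order_dilate A lam n hn, ← chain_dilate A lam n hn]
    refine ncard_lattice_eq hA (fun a => (n : ℝ) * lam a) ?_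
    intro a ha
    obtain ⟨z, hz⟩ := hlam a ha
    exact ⟨n * z, by show (n : ℝ) * lam a = _; rw [hz]; push_cast; ring⟩
end

section
/- The transfer map φ̃: O(P,A)_λ → C(P,A)_λ and its inverse ψ̃ are both continuous and piecewise affine. -/
open Finset Set

section Aux

variable {P : Type*} [PartialOrder P]

/-- The finset of elements covered by `p`. -/
noncomputable def covFinset [Fintype P] (p : P) : Finset P :=
  @Finset.filter _ (fun q => q ⋖ p) (Classical.decPred _) Finset.univ

lemma mem_covFinset [Fintype P] {q p : P} : q ∈ covFinset p ↔ q ⋖ p := by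
  simp [covFinset]

lemma coe_covFinset [Fintype P] (p : P) : (covFinset p : Set P) = {q | q ⋖ p} := by
  ext q; simp [mem_covFinset]

lemma covFinset_nonempty [Fintype P] {p : P} (h : ¬ IsMin p) : (covFinset p).Nonempty := by
  obtain ⟨q, hq⟩ := not_isMin_iff.mp h
  obtain ⟨m, hm, hmax⟩ := Set.Finite.exists_maximalFor id {r | r < p} (Set.toFinite _) ⟨q, hq⟩
  refine ⟨m, mem_covFinset.mpr ⟨hm, fun r hmr hrp => ?_⟩⟩
  exact absurd (hmax hrp hmr.le) (not_le_of_gt hmr)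

/-- Continuity of a finite `inf'` of continuous real functions. -/
lemma continuous_finset_inf' {X ι : Type*} [TopologicalSpace X] {s : Finset ι}
    (hs : s.Nonempty) {f : ι → X → ℝ} (hf : ∀ i ∈ s, Continuous (f i)) :
    Continuous fun x => s.inf' hs fun i => f i x := by
  induction hs using Finset.Nonempty.cons_induction with
  | singleton a => simpa using hf a (by simp)
  | cons a s ha hne ih =>
    simp only [Finset.inf'_cons (H := hne)]
    exact Continuous.min (hf a (by simp)) (ih fun i hi => hf i (by simp [hi]))

/-- Continuity of a finite `sup'` of continuous real functions. -/
lemma continuous_finset_sup' {X ι : Type*} [TopologicalSpace X] {s : Finset ι}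
    (hs : s.Nonempty) {f : ι → X → ℝ} (hf : ∀ i ∈ s, Continuous (f i)) :
    Continuous fun x => s.sup' hs fun i => f i x := by
  induction hs using Finset.Nonempty.cons_induction with
  | singleton a => simpa using hf a (by simp)
  | cons a s ha hne ih =>
    simp only [Finset.sup'_cons (H := hne)]
    exact Continuous.max (hf a (by simp)) (ih fun i hi => hf i (by simp [hi]))

end Aux
section Psi

variable {P : Type*} [PartialOrder P]

open scoped Classical in
lemma psiFull_def [Finite P] (A : Set P) (lam : P → ℝ) (y : {p : P // p ∉ A} → ℝ) (p : P) :
    psiFull A lam y p =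
      if h : p ∈ A then lam p
      else y ⟨p, h⟩ + sSup {v | ∃ q, ∃ _ : q ⋖ p, v = psiFull A lam y q} := by
  rw [psiFull, WellFounded.fix_eq]

lemma setOf_cov_eq [Fintype P] (p : P) (g : P → ℝ) :
    {v | ∃ q, ∃ _ : q ⋖ p, v = g q} = g '' (covFinset p : Set P) := by
  rw [coe_covFinset]
  ext v
  simp only [Set.mem_setOf_eq, Set.mem_image]
  exact ⟨fun ⟨q, hq, hv⟩ => ⟨q, hq, hv.symm⟩, fun ⟨q, hq, hv⟩ => ⟨q, hq, hv.symm⟩⟩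

lemma psiFull_eq_sup' [Fintype P] (A : Set P) (lam : P → ℝ) (y : {p : P // p ∉ A} → ℝ)
    {p : P} (hp : p ∉ A) (hne : (covFinset p).Nonempty) :
    psiFull A lam y p = y ⟨p, hp⟩ + (covFinset p).sup' hne (fun q => psiFull A lam y q) := by
  rw [psiFull_def, dif_neg hp, setOf_cov_eq,
    ← Finset.sup'_eq_csSup_image _ hne]

lemma continuous_psiFull [Fintype P] (A : Set P) (lam : P → ℝ) (hA : IsMarkedPoset A) (p : P) :
    Continuous fun y : {p : P // p ∉ A} → ℝ => psiFull A lam y p := by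
  refine WellFounded.induction (C := fun p => Continuous fun y : {p : P // p ∉ A} → ℝ => psiFull A lam y p) (wellFounded_lt (α := P)) p ?_
  intro p ih
  by_cases hp : p ∈ A
  · have : (fun y : {p : P // p ∉ A} → ℝ => psiFull A lam y p) = fun _ => lam p := by
      funext y; rw [psiFull_def, dif_pos hp]
    rw [this]; exact continuous_const
  · have hne : (covFinset p).Nonempty :=
      covFinset_nonempty (fun h => hp (hA p (Or.inl h)))
    have : (fun y : {p : P // p ∉ A} → ℝ => psiFull A lam y p) =
        fun y => y ⟨p, hp⟩ + (covFinset p).sup' hne (fun q => psiFull A lam y q) := by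
      funext y; exact psiFull_eq_sup' A lam y hp hne
    rw [this]
    exact (continuous_apply _).add
      (continuous_finset_sup' hne fun q hq => ih q (mem_covFinset.mp hq).lt)

end Psi
section Transfer

variable {P : Type*} [PartialOrder P]

open scoped Classical in
noncomputable def covVal (A : Set P) (lam : P → ℝ) (x : {p : P // p ∉ A} → ℝ)
    (p : {p : P // p ∉ A}) (q : P) : ℝ :=
  x p - (if h : q ∈ A then lam q else x ⟨q, h⟩)

lemma continuous_covVal (A : Set P) (lam : P → ℝ) (p : {p : P // p ∉ A}) (q : P) :
    Continuous fun x : {p : P // p ∉ A} → ℝ => covVal A lam x p q := by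
  classical
  unfold covVal
  by_cases h : q ∈ A
  · simp only [dif_pos h]
    exact (continuous_apply p).sub continuous_const
  · simp only [dif_neg h]
    exact (continuous_apply p).sub (continuous_apply _)

lemma transferMap_set_eq [Fintype P] (A : Set P) (lam : P → ℝ)
    (x : {p : P // p ∉ A} → ℝ) (p : {p : P // p ∉ A}) :
    ({v | ∃ q : {p : P // p ∉ A}, (q : P) ⋖ (p : P) ∧ v = x p - x q} ∪
        {v | ∃ a ∈ A, a ⋖ (p : P) ∧ v = x p - lam a}) =
      covVal A lam x p '' (covFinset (p : P) : Set P) := by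
  rw [coe_covFinset]
  ext v
  simp only [Set.mem_union, Set.mem_setOf_eq, Set.mem_image]
  constructor
  · rintro (⟨q, hq, rfl⟩ | ⟨a, ha, hq, rfl⟩)
    · exact ⟨q, hq, by simp [covVal, q.2]⟩
    · exact ⟨a, hq, by simp [covVal, ha]⟩
  · rintro ⟨q, hq, rfl⟩
    by_cases h : q ∈ A
    · exact Or.inr ⟨q, h, hq, by simp [covVal, h]⟩
    · exact Or.inl ⟨⟨q, h⟩, hq, by simp [covVal, h]⟩

lemma transferMap_eq_inf' [Fintype P] (A : Set P) (lam : P → ℝ)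
    (x : {p : P // p ∉ A} → ℝ) (p : {p : P // p ∉ A})
    (hne : (covFinset (p : P)).Nonempty) :
    transferMap A lam x p = (covFinset (p : P)).inf' hne (covVal A lam x p) := by
  rw [transferMap, transferMap_set_eq, Finset.inf'_eq_csInf_image _ hne]

lemma covFinset_nonempty_of_marked [Fintype P] {A : Set P} (hA : IsMarkedPoset A)
    (p : {p : P // p ∉ A}) : (covFinset (p : P)).Nonempty :=
  covFinset_nonempty (fun h => p.2 (hA p (Or.inl h)))

lemma continuous_transferMap [Fintype P] (A : Set P) (lam : P → ℝ) (hA : IsMarkedPoset A) :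
    Continuous (transferMap A lam) := by
  refine continuous_pi fun p => ?_
  have hne := covFinset_nonempty_of_marked hA p
  have : (fun x : {p : P // p ∉ A} → ℝ => transferMap A lam x p) =
      fun x => (covFinset (p : P)).inf' hne fun q => covVal A lam x p q := by
    funext x; exact transferMap_eq_inf' A lam x p hne
  rw [this]
  exact continuous_finset_inf' hne fun q _ => continuous_covVal A lam p q

open scoped Classical in
noncomputable def tAff [Fintype P] (A : Set P) (lam : P → ℝ)
    (σ : ∀ p : {p : P // p ∉ A}, {q : P // q ⋖ (p : P)}) :
    ({p : P // p ∉ A} → ℝ) →ᵃ[ℝ] ({p : P // p ∉ A} → ℝ) :=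
  AffineMap.pi fun p =>
    if h : ((σ p : P)) ∈ A then
      (LinearMap.proj (R := ℝ) (φ := fun _ : {p : P // p ∉ A} => ℝ) p).toAffineMap +
        AffineMap.const ℝ _ (-(lam (σ p)))
    else
      (LinearMap.proj (R := ℝ) (φ := fun _ : {p : P // p ∉ A} => ℝ) p -
        LinearMap.proj (⟨σ p, h⟩ : {p : P // p ∉ A})).toAffineMap

lemma tAff_apply [Fintype P] (A : Set P) (lam : P → ℝ)
    (σ : ∀ p : {p : P // p ∉ A}, {q : P // q ⋖ (p : P)})
    (x : {p : P // p ∉ A} → ℝ) (p : {p : P // p ∉ A}) :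
    tAff A lam σ x p = covVal A lam x p (σ p) := by
  rw [tAff, AffineMap.pi_apply]
  by_cases h : ((σ p : P)) ∈ A
  · simp [dif_pos h, covVal, sub_eq_add_neg]
  · simp [dif_neg h, covVal]

lemma exists_tAff_eq [Fintype P] (A : Set P) (lam : P → ℝ) (hA : IsMarkedPoset A)
    (x : {p : P // p ∉ A} → ℝ) :
    ∃ σ : ∀ p : {p : P // p ∉ A}, {q : P // q ⋖ (p : P)},
      transferMap A lam x = tAff A lam σ x := by
  have hne := covFinset_nonempty_of_marked hA (A := A)
  choose σ hσ hval using fun p : {p : P // p ∉ A} =>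
    Finset.exists_mem_eq_inf' (hne p) (covVal A lam x p)
  refine ⟨fun p => ⟨σ p, mem_covFinset.mp (hσ p)⟩, funext fun p => ?_⟩
  rw [transferMap_eq_inf' A lam x p (hne p), tAff_apply, hval p]

end Transfer
section PAff

variable {P : Type*} [PartialOrder P]

open scoped Classical in
noncomputable def pAff [Fintype P] (A : Set P) (lam : P → ℝ)
    (τ : ∀ p : {p : P // p ∉ A}, {q : P // q ⋖ (p : P)}) :
    P → (({p : P // p ∉ A} → ℝ) →ᵃ[ℝ] ℝ) :=
  WellFounded.fix wellFounded_lt (fun p ih =>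
    if h : p ∈ A then AffineMap.const ℝ _ (lam p)
    else (LinearMap.proj (R := ℝ) (φ := fun _ : {p : P // p ∉ A} => ℝ)
        (⟨p, h⟩ : {p : P // p ∉ A})).toAffineMap + ih (τ ⟨p, h⟩) (τ ⟨p, h⟩).2.lt)

open scoped Classical in
lemma pAff_def [Fintype P] (A : Set P) (lam : P → ℝ)
    (τ : ∀ p : {p : P // p ∉ A}, {q : P // q ⋖ (p : P)}) (p : P) :
    pAff A lam τ p =
      if h : p ∈ A then AffineMap.const ℝ _ (lam p)
      else (LinearMap.proj (R := ℝ) (φ := fun _ : {p : P // p ∉ A} => ℝ)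
          (⟨p, h⟩ : {p : P // p ∉ A})).toAffineMap + pAff A lam τ (τ ⟨p, h⟩) := by
  rw [pAff, WellFounded.fix_eq]

lemma exists_pAff_eq [Fintype P] (A : Set P) (lam : P → ℝ) (hA : IsMarkedPoset A)
    (y : {p : P // p ∉ A} → ℝ) :
    ∃ τ : ∀ p : {p : P // p ∉ A}, {q : P // q ⋖ (p : P)},
      ∀ p : P, psiFull A lam y p = pAff A lam τ p y := by
  classical
  have hne := covFinset_nonempty_of_marked hA (A := A)
  choose q hq hval using fun p : {p : P // p ∉ A} =>
    Finset.exists_mem_eq_sup' (hne p) (fun r => psiFull A lam y r)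
  set τ : ∀ p : {p : P // p ∉ A}, {q : P // q ⋖ (p : P)} :=
    fun p => ⟨q p, mem_covFinset.mp (hq p)⟩ with hτ
  refine ⟨τ, ?_⟩
  intro p
  refine WellFounded.induction
    (C := fun p => psiFull A lam y p = pAff A lam τ p y) (wellFounded_lt (α := P)) p ?_
  intro p ih
  by_cases h : p ∈ A
  · rw [psiFull_def, dif_pos h, pAff_def, dif_pos h, AffineMap.const_apply]
  · rw [psiFull_eq_sup' A lam y h (hne ⟨p, h⟩), pAff_def, dif_neg h]
    have h1 : (covFinset ((⟨p, h⟩ : {p : P // p ∉ A}) : P)).sup' (hne ⟨p, h⟩)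
        (fun r => psiFull A lam y r) = psiFull A lam y ((τ ⟨p, h⟩ : P)) := hval ⟨p, h⟩
    rw [h1, ih _ (τ ⟨p, h⟩).2.lt]
    simp [AffineMap.coe_add, LinearMap.coe_toAffineMap]

end PAff
variable {P : Type*} [PartialOrder P]

/-- The transfer map `φ̃ : O(P,A)_λ → C(P,A)_λ` and its inverse `ψ̃` are continuous and
piecewise affine. -/
theorem transferMap_psiTilde_continuous_piecewise_affine [Fintype P]
    (A : Set P) (lam : P → ℝ) (hA : IsMarkedPoset A) :
    ContinuousOn (transferMap A lam) (markedOrderPolytope A lam) ∧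
    ContinuousOn (psiTilde A lam) (markedChainPolytope A lam) ∧
    (∃ (n : ℕ) (f : Fin n →
        (({p : P // p ∉ A} → ℝ) →ᵃ[ℝ] ({p : P // p ∉ A} → ℝ))),
      ∀ x ∈ markedOrderPolytope A lam, ∃ i, transferMap A lam x = f i x) ∧
    (∃ (n : ℕ) (f : Fin n →
        (({p : P // p ∉ A} → ℝ) →ᵃ[ℝ] ({p : P // p ∉ A} → ℝ))),
      ∀ y ∈ markedChainPolytope A lam, ∃ i, psiTilde A lam y = f i y) := by
  classical
  have hpsi : Continuous (psiTilde A lam) :=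
    continuous_pi fun p => continuous_psiFull A lam hA (p : P)
  refine ⟨(continuous_transferMap A lam hA).continuousOn, hpsi.continuousOn, ?_, ?_⟩
  · let I := ∀ p : {p : P // p ∉ A}, {q : P // q ⋖ (p : P)}
    let e : I ≃ Fin (Nat.card I) := Finite.equivFin I
    refine ⟨Nat.card I, fun i => tAff A lam (e.symm i), fun x _ => ?_⟩
    obtain ⟨σ, hσ⟩ := exists_tAff_eq A lam hA x
    exact ⟨e σ, by simp only [Equiv.symm_apply_apply]; exact hσ⟩
  · let I := ∀ p : {p : P // p ∉ A}, {q : P // q ⋖ (p : P)}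
    let e : I ≃ Fin (Nat.card I) := Finite.equivFin I
    refine ⟨Nat.card I, fun i => AffineMap.pi fun p : {p : P // p ∉ A} =>
      pAff A lam (e.symm i) (p : P), fun y _ => ?_⟩
    obtain ⟨τ, hτ⟩ := exists_pAff_eq A lam hA y
    refine ⟨e τ, funext fun p => ?_⟩
    simp only [Equiv.symm_apply_apply, AffineMap.pi_apply]
    exact hτ (p : P)
end

section
/- The integrality compatibility of the transfer map fails for non-integral markings: there exists a marked poset (P,A,λ) with λ ∈ R^A \ Z^A such that the number of integer lattice points in O(P,A)_λ differs from the number in C(P,A)_λ. -/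
open Finset Set

/-- The lattice-point compatibility fails for non-integral markings: there is a marked
poset with real, non-integral marking whose marked order and chain polytopes contain
different numbers of integer lattice points. -/
theorem exists_nonintegral_marking_lattice_counts_differ :
    ∃ (P : Type) (ipo : PartialOrder P) (_ : Fintype P) (A : Set P) (lam : P → ℝ),
      (@IsMarkedPoset P ipo A) ∧ ¬ (∀ a ∈ A, ∃ z : ℤ, lam a = z) ∧
      ((@markedOrderPolytope P ipo A lam) ∩
          {x | ∀ p, ∃ z : ℤ, x p = (z : ℝ)}).ncard ≠
      ((@markedChainPolytope P ipo A lam) ∩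
          {x | ∀ p, ∃ z : ℤ, x p = (z : ℝ)}).ncard := by
  classical
  refine ⟨Fin 3, inferInstance, inferInstance, ({0, 2} : Set (Fin 3)),
    (fun p => if p = 0 then (-(1/2) : ℝ) else 1/2), ?_, ?_, ?_⟩
  · -- marked poset
    intro p hp
    by_contra hA
    have hp1 : p = 1 := by
      simp only [Set.mem_insert_iff, Set.mem_singleton_iff, not_or] at hA
      omega
    subst hp1
    rcases hp with h | h
    · exact absurd (h (show (0 : Fin 3) ≤ 1 by decide)) (by decide)
    · exact absurd (h (show (1 : Fin 3) ≤ 2 by decide)) (by decide)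
  · -- non-integral
    intro h
    obtain ⟨z, hz⟩ := h 0 (by simp)
    norm_num at hz
    have h2 : (2 : ℝ) * z = -1 := by rw [← hz]; ring
    have : (2 : ℤ) * z = -1 := by exact_mod_cast h2
    omega
  · -- counts differ
    set A : Set (Fin 3) := ({0, 2} : Set (Fin 3)) with hA
    set lam : Fin 3 → ℝ := fun p => if p = 0 then (-(1/2) : ℝ) else 1/2 with hlam
    have hp1 : (1 : Fin 3) ∉ A := by simp [hA]
    set e : {p : Fin 3 // p ∉ A} := ⟨1, hp1⟩ with he
    have huniq : ∀ q : {p : Fin 3 // p ∉ A}, q = e := by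
      rintro ⟨q, hq⟩
      simp only [hA, Set.mem_insert_iff, Set.mem_singleton_iff, not_or] at hq
      have : q = 1 := by omega
      exact Subtype.ext this
    have hlam0 : lam 0 = -(1/2) := by simp [hlam]
    have hlam2 : lam 2 = 1/2 := by rw [hlam]; exact if_neg (by decide : (2 : Fin 3) ≠ 0)
    -- O ∩ ℤ = { const 0 }
    have hO : (markedOrderPolytope A lam) ∩ {x | ∀ p, ∃ z : ℤ, x p = (z : ℝ)}
        = {fun _ => (0 : ℝ)} := by
      ext x
      constructor
      · rintro ⟨⟨_, h2, h3⟩, hz⟩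
        obtain ⟨z, hxz⟩ := hz e
        have hlo : lam 0 ≤ x e := h2 0 (by simp [hA]) e (by exact (by decide : (0 : Fin 3) < 1))
        have hhi : x e ≤ lam 2 := h3 2 (by simp [hA]) e (by exact (by decide : (1 : Fin 3) < 2))
        rw [hxz, hlam0] at hlo
        rw [hxz, hlam2] at hhi
        have hz0 : z = 0 := by
          have h1 : (-1 : ℝ) < z := by linarith
          have h2' : (z : ℝ) < 1 := by linarith
          have : (-1 : ℤ) < z := by exact_mod_cast h1
          have : z < 1 := by exact_mod_cast h2'
          omega
        have : x e = 0 := by rw [hxz, hz0]; norm_num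
        funext q
        rw [huniq q, this]
      · rintro rfl
        refine ⟨⟨?_, ?_, ?_⟩, ?_⟩
        · intro p q hpq
          exact le_refl _
        · intro a ha p hap
          rw [huniq p] at hap
          have ha0 : a = 0 := by
            rcases ha with rfl | ha
            · rfl
            · simp only [Set.mem_singleton_iff] at ha
              subst ha
              exact absurd hap (by exact (by decide : ¬ (2 : Fin 3) < 1))
          subst ha0
          rw [hlam0]; norm_num
        · intro a ha p hpa
          rw [huniq p] at hpa
          have ha2 : a = 2 := by
            rcases ha with rfl | ha
            · exact absurd hpa (by exact (by decide : ¬ (1 : Fin 3) < 0))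
            · simpa using ha
          subst ha2
          rw [hlam2]; norm_num
        · intro p; exact ⟨0, by norm_num⟩
    -- C ∩ ℤ = { const 0, const 1 }
    have hCmem : ∀ v : ℝ, 0 ≤ v → v ≤ 1 →
        (fun _ : {p : Fin 3 // p ∉ A} => v) ∈ markedChainPolytope A lam := by
      intro v hv0 hv1
      refine ⟨fun _ => hv0, ?_⟩
      intro a ha b hb k c hc hac hcb
      have hk : k = 0 := by
        by_contra hk
        have h01 : (0 : Fin (k+1)) < ⟨1, by omega⟩ := by
          simp [Fin.lt_def]
        have := hc h01
        rw [huniq (c 0), huniq (c ⟨1, by omega⟩)] at this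
        exact lt_irrefl _ this
      subst hk
      have hc0 : c 0 = e := huniq _
      rw [hc0] at hac
      have hlast : c (Fin.last 0) = e := huniq _
      rw [hlast] at hcb
      have ha0 : a = 0 := by
        rcases ha with rfl | ha
        · rfl
        · simp only [Set.mem_singleton_iff] at ha
          subst ha; exact absurd hac (by exact (by decide : ¬ (2 : Fin 3) < 1))
      have hb2 : b = 2 := by
        rcases hb with rfl | hb
        · exact absurd hcb (by exact (by decide : ¬ (1 : Fin 3) < 0))
        · simpa using hb
      subst ha0; subst hb2
      rw [hlam0, hlam2, Fin.sum_univ_one]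
      linarith
    have hC : (markedChainPolytope A lam) ∩ {x | ∀ p, ∃ z : ℤ, x p = (z : ℝ)}
        = {fun _ => (0 : ℝ), fun _ => (1 : ℝ)} := by
      ext x
      constructor
      · rintro ⟨⟨hnn, hch⟩, hz⟩
        obtain ⟨z, hxz⟩ := hz e
        have h0 : (0 : ℝ) ≤ x e := hnn e
        have hsum := hch 0 (by simp [hA]) 2 (by simp [hA]) 0 (fun _ => e)
          (fun i j hij => absurd hij (by omega))
          (by exact (by decide : (0 : Fin 3) < 1)) (by exact (by decide : (1 : Fin 3) < 2))
        rw [Fin.sum_univ_one] at hsum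
        rw [hlam0, hlam2] at hsum
        rw [hxz] at h0 hsum
        have hz01 : z = 0 ∨ z = 1 := by
          have h1 : (0 : ℤ) ≤ z := by exact_mod_cast h0
          have h2 : (z : ℝ) ≤ 1 := by linarith
          have h3 : z ≤ 1 := by exact_mod_cast h2
          omega
        rcases hz01 with rfl | rfl
        · left
          funext q; rw [huniq q, hxz]; norm_num
        · right
          funext q; rw [huniq q, hxz]; norm_num
      · rintro (rfl | rfl)
        · exact ⟨hCmem 0 le_rfl (by norm_num), fun p => ⟨0, by norm_num⟩⟩
        · exact ⟨hCmem 1 (by norm_num) le_rfl, fun p => ⟨1, by norm_num⟩⟩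
    rw [hO, hC, Set.ncard_singleton, Set.ncard_pair]
    · omega
    · intro h
      have := congrFun h e
      norm_num at this
end
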